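/- Let Γ be an infinite cardinal and 𝒜 ⊆ [Γ]^Γ an almost disjoint family of cardinality greater than Γ. Suppose T : Y_𝒜 → ℓ_∞(Γ) is a bounded linear operator whose kernel contains Z_𝒜. Then 𝒜 contains a subfamily 𝒜' with |𝒜'| = |𝒜| such that Y_{𝒜'} ⊆ ker T. -/

import Mathlib

open Cardinal Set

noncomputable def ind {Γ : Type*} (A : Set Γ) : lp (fun _ : Γ => ℝ) ⊤ :=
  ⟨A.indicator 1, memℓp_infty ⟨1, by
    rintro r ⟨γ, rfl⟩
    by_cases h : γ ∈ A <;> simp [Set.indicator_apply, h]⟩⟩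

def AlmostDisjoint {Γ : Type*} (𝒜 : Set (Set Γ)) : Prop :=
  (∀ A ∈ 𝒜, #A = #Γ) ∧ ∀ A ∈ 𝒜, ∀ B ∈ 𝒜, A ≠ B → #(↥(A ∩ B)) < #Γ

noncomputable def Ysub {Γ : Type*} (𝒜 : Set (Set Γ)) : Submodule ℝ (lp (fun _ : Γ => ℝ) ⊤) :=
  (Submodule.span ℝ
    {y | ∃ (n : ℕ) (A : Fin (n + 1) → Set Γ), (∀ i, A i ∈ 𝒜) ∧ y = ind (⋂ i, A i)}).topologicalClosure

def Zgen {Γ : Type*} (𝒜 : Set (Set Γ)) : Set (lp (fun _ : Γ => ℝ) ⊤) :=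
  {y | ∃ (n : ℕ) (A : Fin (n + 2) → Set Γ),
    (∀ i, A i ∈ 𝒜) ∧ Function.Injective A ∧ y = ind (⋂ i, A i)}

noncomputable def Zsub {Γ : Type*} (𝒜 : Set (Set Γ)) : Submodule ℝ (lp (fun _ : Γ => ℝ) ⊤) :=
  (Submodule.span ℝ (Zgen 𝒜)).topologicalClosure

section Helpers

variable {Γ : Type*}

lemma ind_coe (A : Set Γ) : (ind A : ∀ _ : Γ, ℝ) = A.indicator 1 := rfl

lemma ind_empty : ind (∅ : Set Γ) = 0 := by
  apply lp.ext
  rw [lp.coeFn_zero, ind_coe]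
  funext γ; simp

lemma ind_union (P Q : Set Γ) : ind (P ∪ Q) = ind P + ind Q - ind (P ∩ Q) := by
  apply lp.ext
  rw [lp.coeFn_sub, lp.coeFn_add]
  funext γ
  by_cases hp : γ ∈ P <;> by_cases hq : γ ∈ Q <;>
    simp [ind_coe, Set.indicator_apply, hp, hq]

lemma norm_ind_le (A : Set Γ) : ‖ind A‖ ≤ 1 := by
  refine lp.norm_le_of_forall_le zero_le_one fun γ => ?_
  by_cases h : γ ∈ A <;> simp [ind_coe, Set.indicator_apply, h]

lemma exists_enum (u : Finset (Set Γ)) (h2 : 2 ≤ u.card) :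
    ∃ (m : ℕ) (B : Fin (m + 2) → Set Γ), Function.Injective B ∧ Set.range B = ↑u := by
  obtain ⟨m, hm⟩ : ∃ m, u.card = m + 2 := ⟨u.card - 2, by omega⟩
  refine ⟨m, fun k => ↑(u.equivFin.symm (Fin.cast hm.symm k)), ?_, ?_⟩
  · intro a b hab
    have := u.equivFin.symm.injective (Subtype.coe_injective hab)
    exact Fin.cast_injective hm.symm this
  · ext x
    simp only [Set.mem_range, Finset.mem_coe]
    constructor
    · rintro ⟨k, rfl⟩; exact (u.equivFin.symm _).2
    · intro hx
      exact ⟨Fin.cast hm (u.equivFin ⟨x, hx⟩), by simp⟩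

lemma ind_sInter_mem_Zgen {𝒜 : Set (Set Γ)} (u : Finset (Set Γ)) (hu : ↑u ⊆ 𝒜)
    (h2 : 2 ≤ u.card) : ind (⋂₀ (↑u : Set (Set Γ))) ∈ Zgen 𝒜 := by
  obtain ⟨m, B, hinj, hrange⟩ := exists_enum u h2
  exact ⟨m, B, fun k => hu (hrange ▸ ⟨k, rfl⟩), hinj, by rw [← hrange, Set.sInter_range]⟩

lemma ind_mem_Ysub {𝒜 : Set (Set Γ)} {A : Set Γ} (hA : A ∈ 𝒜) : ind A ∈ Ysub 𝒜 :=
  Submodule.le_topologicalClosure _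
    (Submodule.subset_span ⟨0, fun _ => A, fun _ => hA, by rw [Set.iInter_const]⟩)

lemma Zsub_le_Ysub (𝒜 : Set (Set Γ)) : Zsub 𝒜 ≤ Ysub 𝒜 :=
  Submodule.topologicalClosure_mono (Submodule.span_mono (by
    rintro y ⟨n, A, hA, hinj, rfl⟩; exact ⟨n + 1, A, hA, rfl⟩))

lemma mem_Zsub_of_Zgen {𝒜 : Set (Set Γ)} {y : lp (fun _ : Γ => ℝ) ⊤} (h : y ∈ Zgen 𝒜) :
    y ∈ Zsub 𝒜 :=
  Submodule.le_topologicalClosure _ (Submodule.subset_span h)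

lemma inter_sUnion_mem_Zsub {𝒜 : Set (Set Γ)} :
    ∀ s : Finset (Set Γ), ↑s ⊆ 𝒜 → ∀ t : Finset (Set Γ), ↑t ⊆ 𝒜 → t.Nonempty →
      (∀ a ∈ s, a ∉ t) → ind (⋂₀ (↑t : Set (Set Γ)) ∩ ⋃₀ ↑s) ∈ Zsub 𝒜 := by
  classical
  intro s
  induction s using Finset.induction_on with
  | empty =>
    intro _ t _ _ _
    simp only [Finset.coe_empty, Set.sUnion_empty, Set.inter_empty, ind_empty]
    exact zero_mem _
  | @insert a s' ha ih =>
    intro hs t ht htne hdisj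
    have hsub' : (↑s' : Set (Set Γ)) ⊆ 𝒜 := fun x hx => hs (by simp [hx])
    have ha𝒜 : a ∈ 𝒜 := hs (by simp)
    have hat : a ∉ t := hdisj a (by simp)
    have key : ⋂₀ (↑t : Set (Set Γ)) ∩ ⋃₀ ↑(insert a s')
        = (⋂₀ (↑(insert a t) : Set (Set Γ))) ∪ (⋂₀ (↑t : Set (Set Γ)) ∩ ⋃₀ ↑s') := by
      simp only [Finset.coe_insert, Set.sUnion_insert, Set.sInter_insert]
      ext γ; simp only [Set.mem_inter_iff, Set.mem_union]; tauto
    have hPQ : (⋂₀ (↑(insert a t) : Set (Set Γ))) ∩ ((⋂₀ (↑t : Set (Set Γ))) ∩ ⋃₀ ↑s')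
        = ⋂₀ (↑(insert a t) : Set (Set Γ)) ∩ ⋃₀ ↑s' := by
      simp only [Finset.coe_insert, Set.sInter_insert]
      ext γ; simp only [Set.mem_inter_iff]; tauto
    have hsubt : (↑(insert a t) : Set (Set Γ)) ⊆ 𝒜 := by
      rw [Finset.coe_insert]
      exact Set.insert_subset ha𝒜 ht
    have hcard2 : 2 ≤ (insert a t).card := by
      rw [Finset.card_insert_of_notMem hat]
      have := Finset.card_pos.2 htne
      omega
    have h1 : ind (⋂₀ (↑(insert a t) : Set (Set Γ))) ∈ Zsub 𝒜 :=
      mem_Zsub_of_Zgen (ind_sInter_mem_Zgen _ hsubt hcard2)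
    have h2 := ih hsub' t ht htne (fun b hb => hdisj b (by simp [hb]))
    have h3 := ih hsub' (insert a t) hsubt ⟨a, by simp⟩ (fun b hb => by
      simp only [Finset.mem_insert, not_or]
      exact ⟨fun h => ha (h ▸ hb), hdisj b (by simp [hb]) ⟩)
    rw [key, ind_union, hPQ]
    exact sub_mem (add_mem h1 h2) h3

lemma sUnion_sub_sum_mem_Zsub {𝒜 : Set (Set Γ)} :
    ∀ s : Finset (Set Γ), ↑s ⊆ 𝒜 →
      ind (⋃₀ (↑s : Set (Set Γ))) - ∑ A ∈ s, ind A ∈ Zsub 𝒜 := by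
  classical
  intro s
  induction s using Finset.induction_on with
  | empty =>
    intro _
    simp only [Finset.coe_empty, Set.sUnion_empty, ind_empty, Finset.sum_empty, sub_zero]
    exact zero_mem _
  | @insert a s' ha ih =>
    intro hs
    have hsub' : (↑s' : Set (Set Γ)) ⊆ 𝒜 := fun x hx => hs (by simp [hx])
    have ha𝒜 : a ∈ 𝒜 := hs (by simp)
    have hL := inter_sUnion_mem_Zsub s' hsub' {a} (by simp [ha𝒜]) ⟨a, by simp⟩
      (fun b hb => by simp only [Finset.mem_singleton]; exact fun h => ha (h ▸ hb))
    have hL' : ind (a ∩ ⋃₀ (↑s' : Set (Set Γ))) ∈ Zsub 𝒜 := by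
      have he : (⋂₀ (↑({a} : Finset (Set Γ)) : Set (Set Γ))) = a := by simp
      rwa [he] at hL
    rw [Finset.sum_insert ha, Finset.coe_insert, Set.sUnion_insert, ind_union]
    have hre : ind a + ind (⋃₀ (↑s' : Set (Set Γ))) - ind (a ∩ ⋃₀ ↑s')
        - (ind a + ∑ A ∈ s', ind A)
        = (ind (⋃₀ (↑s' : Set (Set Γ))) - ∑ A ∈ s', ind A) - ind (a ∩ ⋃₀ ↑s') := by abel
    rw [hre]
    exact sub_mem (ih hsub') hL'

lemma ind_sUnion_mem_Ysub {𝒜 : Set (Set Γ)} (s : Finset (Set Γ)) (hs : ↑s ⊆ 𝒜) :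
    ind (⋃₀ (↑s : Set (Set Γ))) ∈ Ysub 𝒜 := by
  have h := sUnion_sub_sum_mem_Zsub s hs
  have he : ind (⋃₀ (↑s : Set (Set Γ)))
      = (∑ A ∈ s, ind A) + (ind (⋃₀ (↑s : Set (Set Γ))) - ∑ A ∈ s, ind A) := by abel
  rw [he]
  exact add_mem (Submodule.sum_mem _ fun A hA => ind_mem_Ysub (hs hA)) (Zsub_le_Ysub 𝒜 h)

end Helpers

set_option synthInstance.maxHeartbeats 800000 in
set_option maxHeartbeats 800000 in
theorem kernel_contains_Ysub_of_contains_Zsub {Γ : Type*} [Infinite Γ] (𝒜 : Set (Set Γ))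
    (h𝒜 : AlmostDisjoint 𝒜) (hcard : #Γ < #𝒜)
    (T : ↥(Ysub 𝒜) →L[ℝ] lp (fun _ : Γ => ℝ) ⊤)
    (hker : ∀ x : ↥(Ysub 𝒜), (x : lp (fun _ : Γ => ℝ) ⊤) ∈ Zsub 𝒜 → T x = 0) :
    ∃ 𝒜' ⊆ 𝒜, #𝒜' = #𝒜 ∧
      ∀ x : ↥(Ysub 𝒜), (x : lp (fun _ : Γ => ℝ) ⊤) ∈ Ysub 𝒜' → T x = 0 := by
  classical
  -- the value of T on single indicators, as a total function
  set F : Set Γ → lp (fun _ : Γ => ℝ) ⊤ :=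
    fun A => if h : A ∈ 𝒜 then T ⟨ind A, ind_mem_Ysub h⟩ else 0 with hF
  -- key computation: T on the indicator of a finite union
  have keyT : ∀ (s : Finset (Set Γ)) (hs : (↑s : Set (Set Γ)) ⊆ 𝒜)
      (hy : ind (⋃₀ (↑s : Set (Set Γ))) ∈ Ysub 𝒜),
      T ⟨ind (⋃₀ (↑s : Set (Set Γ))), hy⟩ = ∑ B ∈ s, F B := by
    intro s hs hy
    have hz : ind (⋃₀ (↑s : Set (Set Γ))) - ∑ A ∈ s, ind A ∈ Zsub 𝒜 :=
      sUnion_sub_sum_mem_Zsub s hs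
    have hzY : ind (⋃₀ (↑s : Set (Set Γ))) - ∑ A ∈ s, ind A ∈ Ysub 𝒜 := Zsub_le_Ysub 𝒜 hz
    have heq : (⟨ind (⋃₀ (↑s : Set (Set Γ))), hy⟩ : ↥(Ysub 𝒜))
        = (∑ B ∈ s.attach, (⟨ind ↑B, ind_mem_Ysub (hs B.2)⟩ : ↥(Ysub 𝒜)))
          + ⟨_, hzY⟩ := by
      apply Subtype.ext
      rw [Submodule.coe_add, AddSubmonoidClass.coe_finset_sum]
      simp only
      rw [Finset.sum_attach s (fun B => ind B)]
      abel
    rw [heq, map_add, map_sum, hker _ hz, add_zero, ← Finset.sum_attach s F]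
    refine Finset.sum_congr rfl fun B _ => ?_
    rw [hF]
    simp only [dif_pos (hs B.2)]
  -- the exceptional family
  set S : Set (Set Γ) := {A | F A ≠ 0} with hSdef
  have hS𝒜 : S ⊆ 𝒜 := by
    intro A hA
    by_contra h
    exact hA (by rw [hF]; simp only [dif_neg h])
  -- cardinality bound on S
  have hScard : #S ≤ #Γ := by
    by_contra hle
    push_neg at hle
    set Sn : ℕ → Set (Set Γ) := fun n => {A ∈ S | 1 / ((n : ℝ) + 1) ≤ ‖F A‖} with hSn
    -- pigeonhole over n
    have hcover : S ⊆ ⋃ n : ULift ℕ, Sn n.down := by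
      intro A hA
      have hpos : 0 < ‖F A‖ := norm_pos_iff.mpr hA
      obtain ⟨n, hn⟩ := exists_nat_one_div_lt hpos
      exact Set.mem_iUnion.2 ⟨ULift.up n, hA, hn.le⟩
    obtain ⟨n, hn⟩ : ∃ n : ℕ, #Γ < #(Sn n) := by
      by_contra hno
      push_neg at hno
      have h1 : #S ≤ #(ULift ℕ) * ⨆ n : ULift ℕ, #(Sn n.down) :=
        (mk_le_mk_of_subset hcover).trans (mk_iUnion_le _)
      have h2 : (⨆ n : ULift ℕ, #(Sn n.down)) ≤ #Γ := ciSup_le' fun n => hno n.down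
      have h3 : #(ULift ℕ) * (⨆ n : ULift ℕ, #(Sn n.down)) ≤ ℵ₀ * #Γ := by
        apply mul_le_mul' _ h2
        simp [Cardinal.mk_uLift]
      have h4 : ℵ₀ * #Γ = #Γ := by
        rw [Cardinal.mul_eq_max (le_refl ℵ₀) (aleph0_le_mk Γ)]
        exact max_eq_right (aleph0_le_mk Γ)
      exact absurd ((h1.trans h3).trans_eq h4) (not_le.mpr hle)
    set ε : ℝ := 1 / ((n : ℝ) + 1) with hε
    have hεpos : 0 < ε := by positivity
    have hε2 : 0 < ε / 2 := by positivity
    -- choose a coordinate witnessing a large value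
    have hchoose : ∀ A : Set Γ, ∃ γ : Γ, A ∈ Sn n →
        ε / 2 < ‖(F A : ∀ _ : Γ, ℝ) γ‖ := by
      intro A
      by_cases hA : A ∈ Sn n
      · by_contra h
        push_neg at h
        have hb : ‖F A‖ ≤ ε / 2 := lp.norm_le_of_forall_le hε2.le (fun γ => (h γ).2)
        have : ε ≤ ‖F A‖ := hA.2
        linarith
      · exact ⟨Classical.arbitrary Γ, fun h => absurd h hA⟩
    choose γf hγf using hchoose
    -- pigeonhole over γ
    set Fib : Γ → Set (Set Γ) := fun γ => {A ∈ Sn n | γf A = γ} with hFib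
    obtain ⟨γ₀, hγ₀⟩ : ∃ γ₀ : Γ, ℵ₀ < #(Fib γ₀) := by
      by_contra hno
      push_neg at hno
      have hcover2 : Sn n ⊆ ⋃ γ : Γ, Fib γ := fun A hA => Set.mem_iUnion.2 ⟨γf A, hA, rfl⟩
      have h1 : #(Sn n) ≤ #Γ * ⨆ γ : Γ, #(Fib γ) :=
        (mk_le_mk_of_subset hcover2).trans (mk_iUnion_le _)
      have h2 : (⨆ γ : Γ, #(Fib γ)) ≤ ℵ₀ := ciSup_le' fun γ => hno γ
      have h3 : #Γ * (⨆ γ : Γ, #(Fib γ)) ≤ #Γ * ℵ₀ := mul_le_mul' le_rfl h2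
      have h4 : #Γ * ℵ₀ = #Γ := by
        rw [Cardinal.mul_eq_max (aleph0_le_mk Γ) (le_refl ℵ₀)]
        exact max_eq_left (aleph0_le_mk Γ)
      exact absurd ((h1.trans h3).trans_eq h4) (not_le.mpr hn)
    have hFibInf : (Fib γ₀).Infinite :=
      Set.infinite_coe_iff.mp (Cardinal.infinite_iff.mpr hγ₀.le)
    -- split by sign
    set Pos : Set (Set Γ) := {A ∈ Fib γ₀ | 0 < (F A : ∀ _ : Γ, ℝ) γ₀} with hPos
    obtain ⟨c, hc, W, hWinf, hWFib, hWc⟩ :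
        ∃ c : ℝ, (c = 1 ∨ c = -1) ∧ ∃ W : Set (Set Γ), W.Infinite ∧ W ⊆ Fib γ₀ ∧
          ∀ A ∈ W, ε / 2 < c * (F A : ∀ _ : Γ, ℝ) γ₀ := by
      have hsplit : Fib γ₀ ⊆ Pos ∪ (Fib γ₀ \ Pos) := fun A hA => by
        by_cases h : A ∈ Pos
        · exact Or.inl h
        · exact Or.inr ⟨hA, h⟩
      by_cases hp : Pos.Infinite
      · refine ⟨1, Or.inl rfl, Pos, hp, fun A hA => hA.1, fun A hA => ?_⟩
        have h2 : ε / 2 < ‖(F A : ∀ _ : Γ, ℝ) γ₀‖ := by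
          have := hγf A hA.1.1
          rwa [hA.1.2] at this
        rw [one_mul]
        rwa [Real.norm_eq_abs, abs_of_pos hA.2] at h2
      · have hq : (Fib γ₀ \ Pos).Infinite := by
          by_contra hq
          exact hFibInf (Set.Finite.subset ((Set.not_infinite.mp hp).union
            (Set.not_infinite.mp hq)) hsplit)
        refine ⟨-1, Or.inr rfl, Fib γ₀ \ Pos, hq, Set.diff_subset, fun A hA => ?_⟩
        have h2 : ε / 2 < ‖(F A : ∀ _ : Γ, ℝ) γ₀‖ := by
          have := hγf A hA.1.1
          rwa [hA.1.2] at this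
        have hnp : ¬ (0 < (F A : ∀ _ : Γ, ℝ) γ₀) := fun h => hA.2 ⟨hA.1, h⟩
        push_neg at hnp
        rw [Real.norm_eq_abs, abs_of_nonpos hnp] at h2
        linarith
    obtain ⟨N, hN⟩ := exists_nat_gt (‖T‖ / (ε / 2))
    have hNT : ‖T‖ < N * (ε / 2) := (div_lt_iff₀ hε2).mp hN
    obtain ⟨s, hsW, hscard⟩ := hWinf.exists_subset_card_eq N
    have hs𝒜 : (↑s : Set (Set Γ)) ⊆ 𝒜 := fun A hA => hS𝒜 ((hWFib (hsW hA)).1.1)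
    have hyY := ind_sUnion_mem_Ysub s hs𝒜
    have hTx := keyT s hs𝒜 hyY
    have hnorm : ‖(∑ B ∈ s, F B : lp (fun _ : Γ => ℝ) ⊤)‖ ≤ ‖T‖ := by
      rw [← hTx]
      exact T.unit_le_opNorm _ (norm_ind_le _)
    have happ : ‖((∑ B ∈ s, F B : lp (fun _ : Γ => ℝ) ⊤) : ∀ _ : Γ, ℝ) γ₀‖ ≤ ‖T‖ :=
      (lp.norm_apply_le_norm ENNReal.top_ne_zero _ γ₀).trans hnorm
    have hsum_apply : ((∑ B ∈ s, F B : lp (fun _ : Γ => ℝ) ⊤) : ∀ _ : Γ, ℝ) γ₀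
        = ∑ B ∈ s, (F B : ∀ _ : Γ, ℝ) γ₀ := by
      rw [lp.coeFn_sum, Finset.sum_apply]
    have hlow : (N : ℝ) * (ε / 2) ≤ c * ∑ B ∈ s, (F B : ∀ _ : Γ, ℝ) γ₀ := by
      rw [Finset.mul_sum]
      calc (N : ℝ) * (ε / 2) = ∑ _B ∈ s, (ε / 2) := by
            rw [Finset.sum_const, hscard, nsmul_eq_mul]
        _ ≤ ∑ B ∈ s, c * (F B : ∀ _ : Γ, ℝ) γ₀ :=
            Finset.sum_le_sum fun B hB => (hWc B (hsW hB)).le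
    have habs : c * (∑ B ∈ s, (F B : ∀ _ : Γ, ℝ) γ₀)
        ≤ ‖(∑ B ∈ s, (F B : ∀ _ : Γ, ℝ) γ₀ : ℝ)‖ := by
      rw [Real.norm_eq_abs]
      rcases hc with rfl | rfl
      · rw [one_mul]; exact le_abs_self _
      · rw [neg_one_mul]; exact neg_le_abs _
    rw [hsum_apply] at happ
    linarith
  -- assemble the answer
  refine ⟨𝒜 \ S, Set.diff_subset, ?_, ?_⟩
  · refine le_antisymm (mk_le_mk_of_subset Set.diff_subset) ?_
    by_contra h
    push_neg at h
    have h2 : #S < #𝒜 := hScard.trans_lt hcard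
    have h3 : #𝒜 ≤ #(↥(𝒜 \ S ∪ S)) := mk_le_mk_of_subset (by
      intro A hA
      by_cases hAS : A ∈ S
      · exact Or.inr hAS
      · exact Or.inl ⟨hA, hAS⟩)
    have h4 := h3.trans (mk_union_le _ _)
    have h5 : ℵ₀ ≤ #𝒜 := (aleph0_le_mk Γ).trans hcard.le
    exact absurd h4 (not_le.mpr (Cardinal.add_lt_of_lt h5 h h2))
  · intro x hx
    set K : Submodule ℝ (lp (fun _ : Γ => ℝ) ⊤) :=
      Submodule.map (Ysub 𝒜).subtype (LinearMap.ker (T : ↥(Ysub 𝒜) →ₗ[ℝ] lp (fun _ : Γ => ℝ) ⊤)) with hK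
    have hKclosed : IsClosed (K : Set (lp (fun _ : Γ => ℝ) ⊤)) := by
      have h1 : IsClosed ((Ysub 𝒜) : Set (lp (fun _ : Γ => ℝ) ⊤)) :=
        Submodule.isClosed_topologicalClosure _
      have h2 : IsClosed {y : ↥(Ysub 𝒜) | T y = 0} :=
        isClosed_singleton.preimage T.continuous
      have h3 : (K : Set (lp (fun _ : Γ => ℝ) ⊤))
          = Subtype.val '' {y : ↥(Ysub 𝒜) | T y = 0} := by
        rw [hK, Submodule.map_coe, Submodule.coe_subtype]
        rfl
      rw [h3]
      exact h1.isClosedEmbedding_subtypeVal.isClosedMap _ h2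
    have hle : Ysub (𝒜 \ S) ≤ K := by
      refine Submodule.topologicalClosure_minimal _ (Submodule.span_le.2 ?_) hKclosed
      rintro y ⟨n, A, hA, rfl⟩
      simp only [SetLike.mem_coe, hK, Submodule.mem_map, LinearMap.mem_ker]
      by_cases hconst : ∀ i, A i = A 0
      · have hI : (⋂ i, A i) = A 0 :=
          subset_antisymm (Set.iInter_subset _ 0)
            (Set.subset_iInter fun i => le_of_eq (hconst i).symm)
        have hA0 : A 0 ∈ 𝒜 \ S := hA 0
        have hT0 : T ⟨ind (A 0), ind_mem_Ysub hA0.1⟩ = 0 := by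
          have hFA : F (A 0) = 0 := not_not.mp hA0.2
          rw [hF] at hFA
          simp only [dif_pos hA0.1] at hFA
          exact hFA
        exact ⟨⟨ind (A 0), ind_mem_Ysub hA0.1⟩, hT0, by rw [hI]; rfl⟩
      · push_neg at hconst
        obtain ⟨i, hi⟩ := hconst
        have hYmem : ind (⋂ j, A j) ∈ Ysub 𝒜 :=
          Submodule.le_topologicalClosure _
            (Submodule.subset_span ⟨n, A, fun j => (hA j).1, rfl⟩)
        have hZ : ind (⋂ j, A j) ∈ Zsub 𝒜 := by
          set u := Finset.image A Finset.univ with hu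
          have hcard2 : 2 ≤ u.card := by
            have : 1 < u.card := Finset.one_lt_card.2
              ⟨A i, by rw [hu]; exact Finset.mem_image_of_mem _ (Finset.mem_univ _),
               A 0, by rw [hu]; exact Finset.mem_image_of_mem _ (Finset.mem_univ _), hi⟩
            omega
          have hrange : (↑u : Set (Set Γ)) = Set.range A := by
            rw [hu, Finset.coe_image, Finset.coe_univ, Set.image_univ]
          have hIs : (⋂₀ (↑u : Set (Set Γ))) = ⋂ j, A j := by
            rw [hrange, Set.sInter_range]
          have hz := ind_sInter_mem_Zgen (𝒜 := 𝒜) u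
            (by rw [hrange]; rintro B ⟨j, rfl⟩; exact (hA j).1) hcard2
          rw [hIs] at hz
          exact mem_Zsub_of_Zgen hz
        exact ⟨⟨ind (⋂ j, A j), hYmem⟩, hker _ hZ, rfl⟩
    obtain ⟨z, hz, hzx⟩ := hle hx
    have hzx' : z = x := Subtype.ext hzx
    rw [← hzx']
    exact LinearMap.mem_ker.mp hz
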